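/- Performance difference lemma for discounted continuing MDPs: for any two stationary policies π and π', any reward function r bounded by r̄, and any state s, the full regret for using π instead of π' from s satisfies v_s(π'; r) - v_s(π; r) = (1/(1-γ)) · E[ρ_S(A, π; r)], where S ~ d_s(·; π') is drawn from the γ-discounted future state distribution induced by π' from s and A ~ π'(·|S). -/

import Mathlib

open scoped BigOperators
open MeasureTheory

/-- A finite discounted Markov decision process `(S, A, p, d_∅, γ)`. -/
structure MDP (S A : Type) [Fintype S] [Fintype A] [DecidableEq S] where
  /-- transition probabilities `p(s' | s, a)` -/
  p : S → A → S → ℝ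
  p_nonneg : ∀ s a s', 0 ≤ p s a s'
  p_sum_one : ∀ s a, ∑ s', p s a s' = 1
  /-- initial state distribution `d_∅` -/
  d0 : S → ℝ
  d0_nonneg : ∀ s, 0 ≤ d0 s
  d0_sum_one : ∑ s, d0 s = 1
  /-- discount factor `γ ∈ [0, 1)` -/
  γ : ℝ
  γ_nonneg : 0 ≤ γ
  γ_lt_one : γ < 1

/-- A stationary policy: a probability distribution `π(·|s)` over actions for each state. -/
structure Policy (S A : Type) [Fintype A] where
  prob : S → A → ℝ
  nonneg : ∀ s a, 0 ≤ prob s a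
  sum_one : ∀ s, ∑ a, prob s a = 1

variable {S A : Type} [Fintype S] [Fintype A] [DecidableEq S]

/-- Distribution of the state `S_i` at time `i` of the Markov chain induced by policy `π`
started at `S_0 = s`. -/
def MDP.stepDist (M : MDP S A) (π : Policy S A) (s : S) : ℕ → S → ℝ
  | 0 => fun s' => if s' = s then 1 else 0
  | i + 1 => fun s' => ∑ s₀ : S, ∑ a : A, M.stepDist π s i s₀ * π.prob s₀ a * M.p s₀ a s'

/-- Expected reward `E[r(S_i, A_{i+1}, S_{i+1})]` at step `i` of the chain induced by `π`
started at `S_0 = s`. -/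
def MDP.expReward (M : MDP S A) (π : Policy S A) (r : S → A → S → ℝ) (s : S) (i : ℕ) : ℝ :=
  ∑ s₀ : S, ∑ a : A, ∑ s' : S, M.stepDist π s i s₀ * π.prob s₀ a * M.p s₀ a s' * r s₀ a s'

/-- The normalized `γ`-discounted expected return
`v_s(π; r) = (1-γ) E[Σ_{i=0}^∞ γ^i r(S_i, A_{i+1}, S_{i+1})]`. -/
noncomputable def MDP.v (M : MDP S A) (π : Policy S A) (r : S → A → S → ℝ) (s : S) : ℝ :=
  (1 - M.γ) * ∑' i : ℕ, M.γ ^ i * M.expReward π r s i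

/-- Expected reward at step `i` of the chain started at `S_0 = s`, conditioned on `A_1 = a`,
following `π` thereafter. -/
def MDP.expRewardQ (M : MDP S A) (π : Policy S A) (r : S → A → S → ℝ) (s : S) (a : A) :
    ℕ → ℝ
  | 0 => ∑ s' : S, M.p s a s' * r s a s'
  | i + 1 => ∑ s' : S, M.p s a s' * M.expReward π r s' i

/-- The normalized `γ`-discounted expected return `q_s(a, π; r)` for taking action `a` in
state `s` and following `π` thereafter. -/
noncomputable def MDP.q (M : MDP S A) (π : Policy S A) (r : S → A → S → ℝ) (s : S) (a : A) :
    ℝ :=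
  (1 - M.γ) * ∑' i : ℕ, M.γ ^ i * M.expRewardQ π r s a i

/-- The (normalized) advantage `ρ_s(a, π; r) = q_s(a, π; r) - v_s(π; r)`. -/
noncomputable def MDP.adv (M : MDP S A) (π : Policy S A) (r : S → A → S → ℝ) (s : S)
    (a : A) : ℝ :=
  M.q π r s a - M.v π r s

/-- The normalized `γ`-discounted expected return from the initial state distribution,
`v_∅(π; r) = E_{S_0 ~ d_∅}[v_{S_0}(π; r)]`. -/
noncomputable def MDP.vInit (M : MDP S A) (π : Policy S A) (r : S → A → S → ℝ) : ℝ :=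
  ∑ s : S, M.d0 s * M.v π r s

/-- The `γ`-discounted future state distribution
`d_s(s'; π) = (1-γ) E[Σ_{i=0}^∞ γ^i 1[S_i = s']]` induced by `π` from `s`. -/
noncomputable def MDP.futureDist (M : MDP S A) (π : Policy S A) (s s' : S) : ℝ :=
  (1 - M.γ) * ∑' i : ℕ, M.γ ^ i * M.stepDist π s i s'

set_option maxHeartbeats 1000000

section Aux

lemma MDP.stepDist_nonneg (M : MDP S A) (π : Policy S A) (s : S) :
    ∀ i s', 0 ≤ M.stepDist π s i s' := by
  intro i
  induction i with
  | zero =>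
    intro s'
    simp only [MDP.stepDist]
    split <;> norm_num
  | succ i ih =>
    intro s'
    exact Finset.sum_nonneg fun s₀ _ => Finset.sum_nonneg fun a _ =>
      mul_nonneg (mul_nonneg (ih s₀) (π.nonneg _ _)) (M.p_nonneg _ _ _)

lemma MDP.stepDist_sum_one (M : MDP S A) (π : Policy S A) (s : S) :
    ∀ i, ∑ s', M.stepDist π s i s' = 1 := by
  intro i
  induction i with
  | zero => simp [MDP.stepDist]
  | succ i ih =>
    simp only [MDP.stepDist]
    rw [Finset.sum_comm]
    calc ∑ s₀ : S, ∑ s' : S, ∑ a : A, M.stepDist π s i s₀ * π.prob s₀ a * M.p s₀ a s'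
        = ∑ s₀ : S, ∑ a : A, ∑ s' : S, M.stepDist π s i s₀ * π.prob s₀ a * M.p s₀ a s' := by
          exact Finset.sum_congr rfl fun s₀ _ => Finset.sum_comm
      _ = ∑ s₀ : S, ∑ a : A, M.stepDist π s i s₀ * π.prob s₀ a := by
          refine Finset.sum_congr rfl fun s₀ _ => Finset.sum_congr rfl fun a _ => ?_
          rw [← Finset.mul_sum, M.p_sum_one, mul_one]
      _ = ∑ s₀ : S, M.stepDist π s i s₀ := by
          refine Finset.sum_congr rfl fun s₀ _ => ?_
          rw [← Finset.mul_sum, π.sum_one, mul_one]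
      _ = 1 := ih

lemma MDP.stepDist_le_one (M : MDP S A) (π : Policy S A) (s : S) (i : ℕ) (s' : S) :
    M.stepDist π s i s' ≤ 1 := by
  have h := M.stepDist_sum_one π s i
  calc M.stepDist π s i s' ≤ ∑ t : S, M.stepDist π s i t :=
        Finset.single_le_sum (fun t _ => M.stepDist_nonneg π s i t) (Finset.mem_univ s')
    _ = 1 := h

lemma MDP.expReward_abs_le (M : MDP S A) (π : Policy S A) {rbar : ℝ}
    {r : S → A → S → ℝ} (hr : ∀ s a s', |r s a s'| ≤ rbar) (s : S) (i : ℕ) :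
    |M.expReward π r s i| ≤ rbar := by
  have key : ∀ s₀ a s', |M.stepDist π s i s₀ * π.prob s₀ a * M.p s₀ a s' * r s₀ a s'|
      ≤ M.stepDist π s i s₀ * π.prob s₀ a * M.p s₀ a s' * rbar := by
    intro s₀ a s'
    have hw : 0 ≤ M.stepDist π s i s₀ * π.prob s₀ a * M.p s₀ a s' :=
      mul_nonneg (mul_nonneg (M.stepDist_nonneg π s i s₀) (π.nonneg _ _)) (M.p_nonneg _ _ _)
    rw [abs_mul, abs_of_nonneg hw]
    exact mul_le_mul_of_nonneg_left (hr _ _ _) hw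
  calc |M.expReward π r s i|
      ≤ ∑ s₀ : S, ∑ a : A, ∑ s' : S,
          |M.stepDist π s i s₀ * π.prob s₀ a * M.p s₀ a s' * r s₀ a s'| := by
        refine le_trans (Finset.abs_sum_le_sum_abs _ _) ?_
        refine Finset.sum_le_sum fun s₀ _ => le_trans (Finset.abs_sum_le_sum_abs _ _) ?_
        exact Finset.sum_le_sum fun a _ => Finset.abs_sum_le_sum_abs _ _
    _ ≤ ∑ s₀ : S, ∑ a : A, ∑ s' : S,
          M.stepDist π s i s₀ * π.prob s₀ a * M.p s₀ a s' * rbar := by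
        exact Finset.sum_le_sum fun s₀ _ => Finset.sum_le_sum fun a _ =>
          Finset.sum_le_sum fun s' _ => key s₀ a s'
    _ = rbar := by
        calc ∑ s₀ : S, ∑ a : A, ∑ s' : S,
              M.stepDist π s i s₀ * π.prob s₀ a * M.p s₀ a s' * rbar
            = ∑ s₀ : S, ∑ a : A, M.stepDist π s i s₀ * π.prob s₀ a * rbar := by
              refine Finset.sum_congr rfl fun s₀ _ => Finset.sum_congr rfl fun a _ => ?_
              rw [← Finset.sum_mul, ← Finset.mul_sum, M.p_sum_one, mul_one]
          _ = ∑ s₀ : S, M.stepDist π s i s₀ * rbar := by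
              refine Finset.sum_congr rfl fun s₀ _ => ?_
              rw [← Finset.sum_mul, ← Finset.mul_sum, π.sum_one, mul_one]
          _ = rbar := by rw [← Finset.sum_mul, M.stepDist_sum_one, one_mul]

lemma summable_geom_bdd {γ : ℝ} (h0 : 0 ≤ γ) (h1 : γ < 1) {f : ℕ → ℝ} {C : ℝ}
    (hf : ∀ i, |f i| ≤ C) : Summable (fun i => γ ^ i * f i) := by
  refine Summable.of_norm_bounded
    ((summable_geometric_of_lt_one h0 h1).mul_left C) fun i => ?_
  rw [Real.norm_eq_abs, abs_mul, abs_pow, abs_of_nonneg h0, mul_comm]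
  exact mul_le_mul_of_nonneg_right (hf i) (pow_nonneg h0 i)

lemma abs_tsum_geom_le {γ C : ℝ} (h0 : 0 ≤ γ) (h1 : γ < 1) {f : ℕ → ℝ} (hf : ∀ i, |f i| ≤ C) :
    |∑' i : ℕ, γ ^ i * f i| ≤ (1 - γ)⁻¹ * C := by
  have hsum : Summable (fun i => γ ^ i * f i) := summable_geom_bdd h0 h1 hf
  have hgsum : Summable (fun i : ℕ => γ ^ i) := summable_geometric_of_lt_one h0 h1
  have htg : ∑' i : ℕ, γ ^ i * C = (1 - γ)⁻¹ * C := by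
    rw [tsum_mul_right, tsum_geometric_of_lt_one h0 h1]
  rw [abs_le]
  constructor
  · have : ∑' i : ℕ, γ ^ i * (-C) ≤ ∑' i : ℕ, γ ^ i * f i := by
      refine Summable.tsum_le_tsum (fun i => ?_) (hgsum.mul_right _) hsum
      exact mul_le_mul_of_nonneg_left ((abs_le.mp (hf i)).1) (pow_nonneg h0 i)
    calc -((1 - γ)⁻¹ * C) = ∑' i : ℕ, γ ^ i * (-C) := by
          rw [tsum_mul_right, tsum_geometric_of_lt_one h0 h1]; ring
      _ ≤ _ := this
  · refine le_trans (Summable.tsum_le_tsum (fun i => ?_) hsum (hgsum.mul_right _)) htg.le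
    exact mul_le_mul_of_nonneg_left ((abs_le.mp (hf i)).2) (pow_nonneg h0 i)

lemma MDP.v_abs_le (M : MDP S A) (π : Policy S A) {rbar : ℝ} (hrbar : 0 ≤ rbar)
    {r : S → A → S → ℝ} (hr : ∀ s a s', |r s a s'| ≤ rbar) (s : S) :
    |M.v π r s| ≤ rbar := by
  have h0 := M.γ_nonneg
  have h1 := M.γ_lt_one
  have hγ : (0:ℝ) < 1 - M.γ := by linarith
  have hbd : |∑' i : ℕ, M.γ ^ i * M.expReward π r s i| ≤ (1 - M.γ)⁻¹ * rbar :=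
    abs_tsum_geom_le h0 h1 (fun i => M.expReward_abs_le π hr s i)
  calc |M.v π r s| = (1 - M.γ) * |∑' i : ℕ, M.γ ^ i * M.expReward π r s i| := by
        rw [MDP.v, abs_mul, abs_of_nonneg hγ.le]
    _ ≤ (1 - M.γ) * ((1 - M.γ)⁻¹ * rbar) := mul_le_mul_of_nonneg_left hbd hγ.le
    _ = rbar := by field_simp

lemma MDP.expRewardQ_abs_le (M : MDP S A) (π : Policy S A) {rbar : ℝ} (hrbar : 0 ≤ rbar)
    {r : S → A → S → ℝ} (hr : ∀ s a s', |r s a s'| ≤ rbar) (s : S) (a : A) (i : ℕ) :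
    |M.expRewardQ π r s a i| ≤ rbar := by
  have key : ∀ (f : S → ℝ), (∀ s', |f s'| ≤ rbar) → |∑ s' : S, M.p s a s' * f s'| ≤ rbar := by
    intro f hf
    calc |∑ s' : S, M.p s a s' * f s'| ≤ ∑ s' : S, |M.p s a s' * f s'| :=
          Finset.abs_sum_le_sum_abs _ _
      _ ≤ ∑ s' : S, M.p s a s' * rbar := by
          refine Finset.sum_le_sum fun s' _ => ?_
          rw [abs_mul, abs_of_nonneg (M.p_nonneg s a s')]
          exact mul_le_mul_of_nonneg_left (hf s') (M.p_nonneg s a s')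
      _ = rbar := by rw [← Finset.sum_mul, M.p_sum_one, one_mul]
  cases i with
  | zero => exact key _ (fun s' => hr s a s')
  | succ i => exact key _ (fun s' => M.expReward_abs_le π hr s' i)

/-- Bellman-like formula for `q`. -/
lemma MDP.q_eq (M : MDP S A) (π : Policy S A) {rbar : ℝ} (hrbar : 0 ≤ rbar)
    {r : S → A → S → ℝ} (hr : ∀ s a s', |r s a s'| ≤ rbar) (s : S) (a : A) :
    M.q π r s a = (1 - M.γ) * (∑ s' : S, M.p s a s' * r s a s')
      + M.γ * ∑ s' : S, M.p s a s' * M.v π r s' := by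
  have h0 := M.γ_nonneg
  have h1 := M.γ_lt_one
  have hsum : Summable (fun i => M.γ ^ i * M.expRewardQ π r s a i) :=
    summable_geom_bdd h0 h1 (fun i => M.expRewardQ_abs_le π hrbar hr s a i)
  have hsumE : ∀ s' : S, Summable (fun i => M.γ ^ i * M.expReward π r s' i) :=
    fun s' => summable_geom_bdd h0 h1 (fun i => M.expReward_abs_le π hr s' i)
  have hshift : (∑' i : ℕ, M.γ ^ i * M.expRewardQ π r s a i)
      = M.expRewardQ π r s a 0
        + M.γ * ∑ s' : S, M.p s a s' * ∑' i : ℕ, M.γ ^ i * M.expReward π r s' i := by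
    rw [Summable.tsum_eq_zero_add hsum]
    simp only [pow_zero, one_mul]
    congr 1
    calc ∑' i : ℕ, M.γ ^ (i + 1) * M.expRewardQ π r s a (i + 1)
        = ∑' i : ℕ, M.γ * (M.γ ^ i * ∑ s' : S, M.p s a s' * M.expReward π r s' i) := by
          refine tsum_congr fun i => ?_
          simp only [MDP.expRewardQ, pow_succ]
          ring
      _ = M.γ * ∑' i : ℕ, ∑ s' : S, M.γ ^ i * (M.p s a s' * M.expReward π r s' i) := by
          rw [tsum_mul_left]
          congr 1
          refine tsum_congr fun i => ?_
          rw [Finset.mul_sum]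
      _ = M.γ * ∑ s' : S, ∑' i : ℕ, M.γ ^ i * (M.p s a s' * M.expReward π r s' i) := by
          congr 1
          refine Summable.tsum_finsetSum fun s' _ => ?_
          have : (fun i => M.γ ^ i * (M.p s a s' * M.expReward π r s' i))
              = fun i => M.p s a s' * (M.γ ^ i * M.expReward π r s' i) := by
            funext i; ring
          rw [this]
          exact (hsumE s').mul_left _
      _ = M.γ * ∑ s' : S, M.p s a s' * ∑' i : ℕ, M.γ ^ i * M.expReward π r s' i := by
          congr 1
          refine Finset.sum_congr rfl fun s' _ => ?_
          rw [← tsum_mul_left]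
          refine tsum_congr fun i => by ring
  have hγ : (1 - M.γ) ≠ 0 := by linarith
  rw [MDP.q, hshift]
  have hv : ∀ s' : S, ∑' i : ℕ, M.γ ^ i * M.expReward π r s' i
      = M.v π r s' / (1 - M.γ) := by
    intro s'
    rw [MDP.v]
    field_simp
  have hv2 : ∑ s' : S, M.p s a s' * ∑' i : ℕ, M.γ ^ i * M.expReward π r s' i
      = (∑ s' : S, M.p s a s' * M.v π r s') / (1 - M.γ) := by
    rw [Finset.sum_div]
    refine Finset.sum_congr rfl fun s' _ => ?_
    rw [hv s', mul_div_assoc]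
  rw [hv2]
  simp only [MDP.expRewardQ]
  field_simp

end Aux

/-- **Performance difference lemma** for discounted continuing MDPs:
`v_s(π'; r) - v_s(π; r) = (1/(1-γ)) · E_{S ~ d_s(·;π'), A ~ π'(·|S)}[ρ_S(A, π; r)]`. -/
theorem performance_difference
    (M : MDP S A) (π π' : Policy S A) (rbar : ℝ) (hrbar : 0 < rbar)
    (r : S → A → S → ℝ) (hr : ∀ s a s', |r s a s'| ≤ rbar) (s : S) :
    M.v π' r s - M.v π r s =
      (1 / (1 - M.γ)) *
        ∑ s' : S, M.futureDist π' s s' * ∑ a : A, π'.prob s' a * M.adv π r s' a := by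
  have h0 := M.γ_nonneg
  have h1 := M.γ_lt_one
  have hγ : (0:ℝ) < 1 - M.γ := by linarith
  have hVbd : ∀ t : S, |M.v π r t| ≤ rbar := fun t => M.v_abs_le π hrbar.le hr t
  -- bound on ⟨d_i, V⟩
  have hb_bd : ∀ i : ℕ, |∑ t : S, M.stepDist π' s i t * M.v π r t| ≤ rbar := by
    intro i
    calc |∑ t : S, M.stepDist π' s i t * M.v π r t|
        ≤ ∑ t : S, |M.stepDist π' s i t * M.v π r t| := Finset.abs_sum_le_sum_abs _ _
      _ ≤ ∑ t : S, M.stepDist π' s i t * rbar := by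
          refine Finset.sum_le_sum fun t _ => ?_
          rw [abs_mul, abs_of_nonneg (M.stepDist_nonneg π' s i t)]
          exact mul_le_mul_of_nonneg_left (hVbd t) (M.stepDist_nonneg π' s i t)
      _ = rbar := by rw [← Finset.sum_mul, M.stepDist_sum_one, one_mul]
  -- key pointwise identity
  have key : ∀ i : ℕ,
      (∑ t : S, M.stepDist π' s i t * ∑ a : A, π'.prob t a * M.adv π r t a)
        = (1 - M.γ) * M.expReward π' r s i
          + M.γ * (∑ t : S, M.stepDist π' s (i + 1) t * M.v π r t)
          - ∑ t : S, M.stepDist π' s i t * M.v π r t := by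
    intro i
    have step1 : ∀ t : S, M.stepDist π' s i t * ∑ a : A, π'.prob t a * M.adv π r t a
        = (1 - M.γ) * (∑ a : A, ∑ t' : S,
              M.stepDist π' s i t * π'.prob t a * M.p t a t' * r t a t')
          + M.γ * (∑ a : A, ∑ t' : S,
              M.stepDist π' s i t * π'.prob t a * M.p t a t' * M.v π r t')
          - M.stepDist π' s i t * M.v π r t := by
      intro t
      have hadv : ∀ a : A, π'.prob t a * M.adv π r t a
          = (1 - M.γ) * (∑ t' : S, π'.prob t a * M.p t a t' * r t a t')
            + M.γ * (∑ t' : S, π'.prob t a * M.p t a t' * M.v π r t')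
            - π'.prob t a * M.v π r t := by
        intro a
        have e1 : ∑ t' : S, π'.prob t a * M.p t a t' * r t a t'
            = π'.prob t a * ∑ t' : S, M.p t a t' * r t a t' := by
          rw [Finset.mul_sum]
          exact Finset.sum_congr rfl fun t' _ => by ring
        have e2 : ∑ t' : S, π'.prob t a * M.p t a t' * M.v π r t'
            = π'.prob t a * ∑ t' : S, M.p t a t' * M.v π r t' := by
          rw [Finset.mul_sum]
          exact Finset.sum_congr rfl fun t' _ => by ring
        rw [MDP.adv, M.q_eq π hrbar.le hr t a, e1, e2]
        ring
      have e3 : M.stepDist π' s i t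
            * ∑ a : A, ∑ t' : S, π'.prob t a * M.p t a t' * r t a t'
          = ∑ a : A, ∑ t' : S,
              M.stepDist π' s i t * π'.prob t a * M.p t a t' * r t a t' := by
        rw [Finset.mul_sum]
        refine Finset.sum_congr rfl fun a _ => ?_
        rw [Finset.mul_sum]
        exact Finset.sum_congr rfl fun t' _ => by ring
      have e4 : M.stepDist π' s i t
            * ∑ a : A, ∑ t' : S, π'.prob t a * M.p t a t' * M.v π r t'
          = ∑ a : A, ∑ t' : S,
              M.stepDist π' s i t * π'.prob t a * M.p t a t' * M.v π r t' := by
        rw [Finset.mul_sum]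
        refine Finset.sum_congr rfl fun a _ => ?_
        rw [Finset.mul_sum]
        exact Finset.sum_congr rfl fun t' _ => by ring
      rw [← e3, ← e4, Finset.sum_congr rfl fun a _ => hadv a]
      rw [Finset.sum_sub_distrib, Finset.sum_add_distrib, ← Finset.mul_sum, ← Finset.mul_sum,
        ← Finset.sum_mul, π'.sum_one, one_mul]
      ring
    have hA : (∑ t : S, ∑ a : A, ∑ t' : S,
          M.stepDist π' s i t * π'.prob t a * M.p t a t' * r t a t')
        = M.expReward π' r s i := rfl
    have hB : (∑ t' : S, M.stepDist π' s (i + 1) t' * M.v π r t')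
        = ∑ t : S, ∑ a : A, ∑ t' : S,
            M.stepDist π' s i t * π'.prob t a * M.p t a t' * M.v π r t' := by
      calc ∑ t' : S, M.stepDist π' s (i + 1) t' * M.v π r t'
          = ∑ t' : S, ∑ t : S, ∑ a : A,
              M.stepDist π' s i t * π'.prob t a * M.p t a t' * M.v π r t' := by
            refine Finset.sum_congr rfl fun t' _ => ?_
            simp only [MDP.stepDist]
            rw [Finset.sum_mul]
            exact Finset.sum_congr rfl fun t _ => Finset.sum_mul _ _ _
        _ = ∑ t : S, ∑ t' : S, ∑ a : A,
              M.stepDist π' s i t * π'.prob t a * M.p t a t' * M.v π r t' :=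
            Finset.sum_comm
        _ = ∑ t : S, ∑ a : A, ∑ t' : S,
              M.stepDist π' s i t * π'.prob t a * M.p t a t' * M.v π r t' :=
            Finset.sum_congr rfl fun t _ => Finset.sum_comm
    calc ∑ t : S, M.stepDist π' s i t * ∑ a : A, π'.prob t a * M.adv π r t a
        = ∑ t : S, ((1 - M.γ) * (∑ a : A, ∑ t' : S,
              M.stepDist π' s i t * π'.prob t a * M.p t a t' * r t a t')
            + M.γ * (∑ a : A, ∑ t' : S,
              M.stepDist π' s i t * π'.prob t a * M.p t a t' * M.v π r t')
            - M.stepDist π' s i t * M.v π r t) :=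
          Finset.sum_congr rfl fun t _ => step1 t
      _ = (1 - M.γ) * (∑ t : S, ∑ a : A, ∑ t' : S,
              M.stepDist π' s i t * π'.prob t a * M.p t a t' * r t a t')
            + M.γ * (∑ t : S, ∑ a : A, ∑ t' : S,
              M.stepDist π' s i t * π'.prob t a * M.p t a t' * M.v π r t')
            - ∑ t : S, M.stepDist π' s i t * M.v π r t := by
          rw [Finset.sum_sub_distrib, Finset.sum_add_distrib, ← Finset.mul_sum,
            ← Finset.mul_sum]
      _ = (1 - M.γ) * M.expReward π' r s i
            + M.γ * (∑ t : S, M.stepDist π' s (i + 1) t * M.v π r t)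
            - ∑ t : S, M.stepDist π' s i t * M.v π r t := by
          rw [hA, hB]
  -- summability facts
  have hsE : Summable (fun i : ℕ => M.γ ^ i * M.expReward π' r s i) :=
    summable_geom_bdd h0 h1 (fun i => M.expReward_abs_le π' hr s i)
  have hsb : Summable (fun i : ℕ => M.γ ^ i * ∑ t : S, M.stepDist π' s i t * M.v π r t) :=
    summable_geom_bdd h0 h1 hb_bd
  have hsb1 : Summable
      (fun i : ℕ => M.γ ^ i * ∑ t : S, M.stepDist π' s (i + 1) t * M.v π r t) :=
    summable_geom_bdd h0 h1 (fun i => hb_bd (i + 1))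
  have hsg : ∀ t : S, Summable (fun i : ℕ =>
      M.γ ^ i * (M.stepDist π' s i t * ∑ a : A, π'.prob t a * M.adv π r t a)) := by
    intro t
    refine summable_geom_bdd h0 h1 (C := |∑ a : A, π'.prob t a * M.adv π r t a|) fun i => ?_
    rw [abs_mul]
    calc |M.stepDist π' s i t| * |∑ a : A, π'.prob t a * M.adv π r t a|
        ≤ 1 * |∑ a : A, π'.prob t a * M.adv π r t a| := by
          refine mul_le_mul_of_nonneg_right ?_ (abs_nonneg _)
          rw [abs_of_nonneg (M.stepDist_nonneg π' s i t)]
          exact M.stepDist_le_one π' s i t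
      _ = _ := one_mul _
  -- rewrite the RHS sum via the discounted occupancy expansion
  have hfuture : (∑ t : S, M.futureDist π' s t * ∑ a : A, π'.prob t a * M.adv π r t a)
      = (1 - M.γ) * ∑' i : ℕ, M.γ ^ i *
          ∑ t : S, M.stepDist π' s i t * ∑ a : A, π'.prob t a * M.adv π r t a := by
    calc ∑ t : S, M.futureDist π' s t * ∑ a : A, π'.prob t a * M.adv π r t a
        = ∑ t : S, (1 - M.γ) * ∑' i : ℕ,
            M.γ ^ i * (M.stepDist π' s i t * ∑ a : A, π'.prob t a * M.adv π r t a) := by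
          refine Finset.sum_congr rfl fun t _ => ?_
          rw [MDP.futureDist, mul_assoc]
          congr 1
          rw [← tsum_mul_right]
          exact tsum_congr fun i => by ring
      _ = (1 - M.γ) * ∑ t : S, ∑' i : ℕ,
            M.γ ^ i * (M.stepDist π' s i t * ∑ a : A, π'.prob t a * M.adv π r t a) := by
          rw [Finset.mul_sum]
      _ = (1 - M.γ) * ∑' i : ℕ, ∑ t : S,
            M.γ ^ i * (M.stepDist π' s i t * ∑ a : A, π'.prob t a * M.adv π r t a) := by
          rw [Summable.tsum_finsetSum fun t _ => hsg t]
      _ = (1 - M.γ) * ∑' i : ℕ, M.γ ^ i *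
            ∑ t : S, M.stepDist π' s i t * ∑ a : A, π'.prob t a * M.adv π r t a := by
          congr 1
          exact tsum_congr fun i => by rw [Finset.mul_sum]
  -- evaluate the tsum using the key identity and telescoping
  have hb0 : (∑ t : S, M.stepDist π' s 0 t * M.v π r t) = M.v π r s := by
    simp [MDP.stepDist]
  have hmain : (∑' i : ℕ, M.γ ^ i *
        ∑ t : S, M.stepDist π' s i t * ∑ a : A, π'.prob t a * M.adv π r t a)
      = M.v π' r s - M.v π r s := by
    have hshift : ∑' i : ℕ, M.γ ^ (i + 1) *
          ∑ t : S, M.stepDist π' s (i + 1) t * M.v π r t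
        = M.γ * ∑' i : ℕ, M.γ ^ i * ∑ t : S, M.stepDist π' s (i + 1) t * M.v π r t := by
      rw [← tsum_mul_left]
      exact tsum_congr fun i => by ring
    calc ∑' i : ℕ, M.γ ^ i *
          ∑ t : S, M.stepDist π' s i t * ∑ a : A, π'.prob t a * M.adv π r t a
        = ∑' i : ℕ, ((1 - M.γ) * (M.γ ^ i * M.expReward π' r s i)
            + M.γ * (M.γ ^ i * ∑ t : S, M.stepDist π' s (i + 1) t * M.v π r t)
            - M.γ ^ i * ∑ t : S, M.stepDist π' s i t * M.v π r t) := by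
          refine tsum_congr fun i => ?_
          rw [key i]
          ring
      _ = ((1 - M.γ) * ∑' i : ℕ, M.γ ^ i * M.expReward π' r s i)
            + M.γ * (∑' i : ℕ, M.γ ^ i * ∑ t : S, M.stepDist π' s (i + 1) t * M.v π r t)
            - ∑' i : ℕ, M.γ ^ i * ∑ t : S, M.stepDist π' s i t * M.v π r t := by
          rw [Summable.tsum_sub ((hsE.mul_left _).add (hsb1.mul_left _)) hsb,
            Summable.tsum_add (hsE.mul_left _) (hsb1.mul_left _), tsum_mul_left, tsum_mul_left]
      _ = ((1 - M.γ) * ∑' i : ℕ, M.γ ^ i * M.expReward π' r s i) - M.v π r s := by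
          rw [Summable.tsum_eq_zero_add hsb, hshift, pow_zero, one_mul, hb0]
          ring
      _ = M.v π' r s - M.v π r s := by
          rw [show M.v π' r s
            = (1 - M.γ) * ∑' i : ℕ, M.γ ^ i * M.expReward π' r s i from rfl]
  rw [hfuture, hmain]
  field_simp
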